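/- Let X and Y be locally finite metric spaces, H an infinite-dimensional separable complex Hilbert space, g : X → Y a coarse map, δ > 0, and V : ℓ²(X;H) → ℓ²(Y;H) an isometry (i.e., V*∘V = 1) whose entries satisfy V_{y,x} = 0 whenever d(g(x), y) ≥ δ. Then the map ad_g : T ↦ V∘T∘V* sends the Roe algebra C*(X) into the Roe algebra C*(Y), and its restriction to C*(X) is a *-homomorphism: it is linear, multiplicative, and adjoint-preserving. -/

import Mathlib

/-- `ℓ²(X; H)`: square-summable functions from `X` to `H`. -/
noncomputable abbrev ellTwo (X : Type) (H : Type) [NormedAddCommGroup H] :=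
  lp (fun _ : X => H) 2

/-- A bounded operator on `ℓ²(X;H)` has propagation at most `r` if its matrix entries
`T_{x,y} : v ↦ (T (δ_y v)) x` vanish whenever `dist x y > r`. -/
def HasPropagationAtMost {X : Type} [MetricSpace X] [DecidableEq X]
    {H : Type} [NormedAddCommGroup H] [InnerProductSpace ℂ H]
    (T : ellTwo X H →L[ℂ] ellTwo X H) (r : ℝ) : Prop :=
  ∀ x y : X, r < dist x y → ∀ v : H, T (lp.single 2 y v) x = 0

/-- All matrix entries of `T` are compact operators on `H`. -/
def HasCompactEntries {X : Type} [MetricSpace X] [DecidableEq X]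
    {H : Type} [NormedAddCommGroup H] [InnerProductSpace ℂ H]
    (T : ellTwo X H →L[ℂ] ellTwo X H) : Prop :=
  ∀ x y : X, IsCompactOperator (fun v : H => T (lp.single 2 y v) x)

/-- The Roe algebra `C*(X)`: the norm closure of the set of operators having finite
propagation and compact entries. -/
def RoeAlgebra (X : Type) [MetricSpace X] [DecidableEq X]
    (H : Type) [NormedAddCommGroup H] [InnerProductSpace ℂ H] :
    Set (ellTwo X H →L[ℂ] ellTwo X H) :=
  closure {T | (∃ r > (0 : ℝ), HasPropagationAtMost T r) ∧ HasCompactEntries T}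

/-- A coarse map between metric spaces: preimages of bounded sets are bounded and
the map is uniformly expansive. -/
def CoarseMap {X Y : Type} [MetricSpace X] [MetricSpace Y] (g : X → Y) : Prop :=
  (∀ B : Set Y, Bornology.IsBounded B → Bornology.IsBounded (g ⁻¹' B)) ∧
  (∀ R > (0 : ℝ), ∃ S > (0 : ℝ), ∀ x x' : X, dist x x' ≤ R → dist (g x) (g x') ≤ S)

section Aux

variable {Z : Type} [DecidableEq Z] {H : Type} [NormedAddCommGroup H]
  [InnerProductSpace ℂ H]

lemma ellTwo_single_add (z : Z) (a b : H) :
    (lp.single 2 z (a + b) : ellTwo Z H) = lp.single 2 z a + lp.single 2 z b := by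
  apply lp.ext
  funext j
  by_cases hj : j = z
  · subst hj
    simp [lp.single_apply_self]
  · simp [lp.single_apply_ne _ _ _ hj]

/-- `lp.single` as a continuous linear map. -/
noncomputable def singleCLM (z : Z) : H →L[ℂ] ellTwo Z H :=
  LinearMap.mkContinuous
    { toFun := fun a => lp.single 2 z a
      map_add' := fun a b => ellTwo_single_add z a b
      map_smul' := fun c a => by simpa using lp.single_smul 2 z a c }
    1 (fun a => by
      have : ‖(lp.single 2 z a : ellTwo Z H)‖ = ‖a‖ :=
        lp.norm_single (E := fun _ : Z => H) (p := 2) (by norm_num) z a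
      simp [this])

@[simp] lemma singleCLM_apply (z : Z) (a : H) :
    (singleCLM z a : ellTwo Z H) = lp.single 2 z a := by simp [singleCLM]

/-- Evaluation at a point as a continuous linear map. -/
noncomputable def evalCLM (z : Z) : ellTwo Z H →L[ℂ] H :=
  LinearMap.mkContinuous
    { toFun := fun u => u z
      map_add' := fun u v => by simp [lp.coeFn_add]
      map_smul' := fun c u => by simp [lp.coeFn_smul] }
    1 (fun u => by
      rw [one_mul]; exact lp.norm_apply_le_norm (by norm_num) u z)

@[simp] lemma evalCLM_apply (z : Z) (u : ellTwo Z H) : evalCLM z u = u z := rfl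

/-- A square-summable function supported in a finite set is the sum of its singletons. -/
lemma sum_single_of_support (F : Finset Z) (u : ellTwo Z H)
    (h : ∀ z ∉ F, u z = 0) :
    ∑ z ∈ F, (lp.single 2 z (u z) : ellTwo Z H) = u := by
  apply lp.ext
  funext j
  rw [lp.coeFn_sum, Finset.sum_apply]
  by_cases hj : j ∈ F
  · rw [Finset.sum_eq_single j
      (fun z _ hzj => lp.single_apply_ne (E := fun _ : Z => H) 2 z (u z) (Ne.symm hzj))
      (fun hjF => absurd hj hjF)]
    exact lp.single_apply_self (E := fun _ : Z => H) 2 j (u j)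
  · rw [Finset.sum_eq_zero
      (fun z hz => lp.single_apply_ne (E := fun _ : Z => H) 2 z (u z)
        (fun hjz => hj (by rwa [hjz])))]
    exact (h j hj).symm

lemma isCompactOperator_finset_sum {ι M N : Type*} [SeminormedAddCommGroup M]
    [SeminormedAddCommGroup N] (s : Finset ι) (f : ι → M → N)
    (h : ∀ i ∈ s, IsCompactOperator (f i)) :
    IsCompactOperator (fun v => ∑ i ∈ s, f i v) := by
  classical
  induction s using Finset.cons_induction with
  | empty => simp only [Finset.sum_empty]; exact isCompactOperator_zero
  | cons a s ha ih =>
    simp only [Finset.sum_cons]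
    exact (h a (Finset.mem_cons_self a s)).add
      (ih fun i hi => h i (Finset.mem_cons_of_mem hi))

end Aux

open scoped InnerProductSpace in
lemma adjoint_entry_zero {X Y : Type} [DecidableEq X] [DecidableEq Y]
    {H : Type} [NormedAddCommGroup H] [InnerProductSpace ℂ H] [CompleteSpace H]
    (V : ellTwo X H →L[ℂ] ellTwo Y H) (y' : Y) (v : H) (x : X)
    (h0 : ∀ w : H, V (lp.single 2 x w) y' = 0) :
    (ContinuousLinearMap.adjoint V (lp.single 2 y' v)) x = 0 := by
  refine ext_inner_left ℂ (fun w => ?_)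
  calc ⟪w, (ContinuousLinearMap.adjoint V (lp.single 2 y' v)) x⟫_ℂ
      = ⟪(lp.single 2 x w : ellTwo X H),
          ContinuousLinearMap.adjoint V (lp.single 2 y' v)⟫_ℂ :=
        (lp.inner_single_left (𝕜 := ℂ) (G := fun _ : X => H) x w _).symm
    _ = ⟪V (lp.single 2 x w), (lp.single 2 y' v : ellTwo Y H)⟫_ℂ :=
        ContinuousLinearMap.adjoint_inner_right V _ _
    _ = ⟪(V (lp.single 2 x w)) y', v⟫_ℂ := lp.inner_single_right (𝕜 := ℂ) (G := fun _ : Y => H) y' v _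
    _ = 0 := by rw [h0 w, inner_zero_left]
    _ = ⟪w, (0 : H)⟫_ℂ := (inner_zero_right w).symm

set_option maxHeartbeats 1000000 in
/-- Conjugation by a covering isometry for a coarse map `g` sends `C*(X)` into `C*(Y)`
and restricts to a `*`-homomorphism on the Roe algebra. -/
theorem adjoint_conjugation_star_hom {X Y : Type} [MetricSpace X] [MetricSpace Y]
    [DecidableEq X] [DecidableEq Y]
    (hLFX : ∀ B : Set X, Bornology.IsBounded B → B.Finite)
    (hLFY : ∀ B : Set Y, Bornology.IsBounded B → B.Finite)
    {H : Type} [NormedAddCommGroup H] [InnerProductSpace ℂ H] [CompleteSpace H]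
    [TopologicalSpace.SeparableSpace H] (hinf : ¬ FiniteDimensional ℂ H)
    (g : X → Y) (hg : CoarseMap g) (δ : ℝ) (hδ : 0 < δ)
    (V : ellTwo X H →L[ℂ] ellTwo Y H)
    (hViso : (ContinuousLinearMap.adjoint V).comp V = ContinuousLinearMap.id ℂ (ellTwo X H))
    (hV : ∀ (x : X) (y : Y), δ ≤ dist (g x) y → ∀ v : H, V (lp.single 2 x v) y = 0) :
    -- `ad_g` maps the Roe algebra of `X` into the Roe algebra of `Y`
    (∀ T ∈ RoeAlgebra X H, V.comp (T.comp (ContinuousLinearMap.adjoint V)) ∈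
        RoeAlgebra Y H) ∧
    -- linearity on `C*(X)`
    (∀ T S : ellTwo X H →L[ℂ] ellTwo X H, T ∈ RoeAlgebra X H → S ∈ RoeAlgebra X H →
      V.comp ((T + S).comp (ContinuousLinearMap.adjoint V)) =
        V.comp (T.comp (ContinuousLinearMap.adjoint V)) +
          V.comp (S.comp (ContinuousLinearMap.adjoint V))) ∧
    (∀ (c : ℂ) (T : ellTwo X H →L[ℂ] ellTwo X H), T ∈ RoeAlgebra X H →
      V.comp ((c • T).comp (ContinuousLinearMap.adjoint V)) =
        c • V.comp (T.comp (ContinuousLinearMap.adjoint V))) ∧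
    -- multiplicativity on `C*(X)`
    (∀ T S : ellTwo X H →L[ℂ] ellTwo X H, T ∈ RoeAlgebra X H → S ∈ RoeAlgebra X H →
      V.comp ((T.comp S).comp (ContinuousLinearMap.adjoint V)) =
        (V.comp (T.comp (ContinuousLinearMap.adjoint V))).comp
          (V.comp (S.comp (ContinuousLinearMap.adjoint V)))) ∧
    -- compatibility with adjoints on `C*(X)`
    (∀ T : ellTwo X H →L[ℂ] ellTwo X H, T ∈ RoeAlgebra X H →
      V.comp ((ContinuousLinearMap.adjoint T).comp (ContinuousLinearMap.adjoint V)) =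
        ContinuousLinearMap.adjoint (V.comp (T.comp (ContinuousLinearMap.adjoint V)))) := by
  classical
  set W := ContinuousLinearMap.adjoint V with hW
  have hWV : ∀ ξ : ellTwo X H, W (V ξ) = ξ := by
    intro ξ
    have := ContinuousLinearMap.ext_iff.mp hViso ξ
    simpa using this
  have hWent : ∀ (y' : Y) (v : H) (x : X), δ ≤ dist (g x) y' →
      (W (lp.single 2 y' v)) x = 0 := by
    intro y' v x hd
    exact adjoint_entry_zero V y' v x (fun w => hV x y' hd w)
  refine ⟨?_, ?_, ?_, ?_, ?_⟩
  · -- main statement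
    intro T hT
    set Φ : (ellTwo X H →L[ℂ] ellTwo X H) →L[ℂ] (ellTwo Y H →L[ℂ] ellTwo Y H) :=
      (ContinuousLinearMap.compL ℂ (ellTwo Y H) (ellTwo X H) (ellTwo Y H) V).comp
        ((ContinuousLinearMap.compL ℂ (ellTwo Y H) (ellTwo X H) (ellTwo X H)).flip W)
      with hΦ
    have hΦapp : ∀ T' : ellTwo X H →L[ℂ] ellTwo X H, Φ T' = V.comp (T'.comp W) :=
      fun T' => rfl
    rw [← hΦapp]
    refine map_mem_closure Φ.continuous hT ?_
    rintro T ⟨⟨r, hr, hprop⟩, hcomp⟩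
    obtain ⟨S, hS, hgS⟩ := hg.2 r hr
    have hballX : ∀ y' : Y, (g ⁻¹' Metric.ball y' δ).Finite :=
      fun y' => hLFX _ (hg.1 _ Metric.isBounded_ball)
    have hcball : ∀ x' : X, (Metric.closedBall x' r).Finite :=
      fun x' => hLFX _ Metric.isBounded_closedBall
    have hdecomp : ∀ (y' : Y) (v : H),
        V (T (W (lp.single 2 y' v))) =
          ∑ x' ∈ (hballX y').toFinset, ∑ x ∈ (hcball x').toFinset,
            V (lp.single 2 x (T (lp.single 2 x' ((W (lp.single 2 y' v)) x')) x)) := by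
      intro y' v
      have hu : (W (lp.single 2 y' v)) =
          ∑ x' ∈ (hballX y').toFinset, lp.single 2 x' ((W (lp.single 2 y' v)) x') := by
        refine (sum_single_of_support _ _ ?_).symm
        intro x hx
        simp only [Set.Finite.mem_toFinset, Set.mem_preimage, Metric.mem_ball] at hx
        exact hWent y' v x (le_of_not_gt hx)
      conv_lhs => rw [hu, map_sum, map_sum]
      refine Finset.sum_congr rfl (fun x' hx' => ?_)
      have hT' : T (lp.single 2 x' ((W (lp.single 2 y' v)) x')) =
          ∑ x ∈ (hcball x').toFinset,
            lp.single 2 x (T (lp.single 2 x' ((W (lp.single 2 y' v)) x')) x) := by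
        refine (sum_single_of_support _ _ ?_).symm
        intro x hx
        simp only [Set.Finite.mem_toFinset, Metric.mem_closedBall] at hx
        exact hprop x x' (lt_of_not_ge hx) _
      conv_lhs => rw [hT', map_sum]
    simp only [Set.mem_setOf_eq]
    constructor
    · refine ⟨S + 2 * δ, by linarith, ?_⟩
      intro y y' hdist v
      have hΦ1 : (Φ T) (lp.single 2 y' v) = V (T (W (lp.single 2 y' v))) := rfl
      rw [hΦ1, hdecomp]
      simp only [lp.coeFn_sum, Finset.sum_apply]
      refine Finset.sum_eq_zero fun x' hx' => Finset.sum_eq_zero fun x hx => ?_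
      by_cases hxy : δ ≤ dist (g x) y
      · exact hV x y hxy _
      · exfalso
        push_neg at hxy
        simp only [Set.Finite.mem_toFinset, Set.mem_preimage, Metric.mem_ball] at hx'
        simp only [Set.Finite.mem_toFinset, Metric.mem_closedBall] at hx
        have h1 := hgS x x' hx
        have h2 : dist y y' ≤ dist y (g x) + dist (g x) (g x') + dist (g x') y' :=
          dist_triangle4 y (g x) (g x') y'
        rw [dist_comm y (g x)] at h2
        linarith
    · intro y y'
      have hfe : (fun v : H => ((Φ T) (lp.single 2 y' v)) y) =
          fun v => ∑ x' ∈ (hballX y').toFinset, ∑ x ∈ (hcball x').toFinset,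
            (V (lp.single 2 x (T (lp.single 2 x' ((W (lp.single 2 y' v)) x')) x))) y := by
        funext v
        have hΦ1 : (Φ T) (lp.single 2 y' v) = V (T (W (lp.single 2 y' v))) := rfl
        rw [hΦ1, hdecomp]
        simp only [lp.coeFn_sum, Finset.sum_apply]
      rw [hfe]
      refine isCompactOperator_finset_sum _ _ (fun x' _ =>
        isCompactOperator_finset_sum _ _ (fun x _ => ?_))
      have hA : IsCompactOperator (fun a : H => T (lp.single 2 x' a) x) := hcomp x x'
      have key := ((hA.comp_clm ((evalCLM x').comp (W.comp (singleCLM y')))).continuous_comp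
        ((evalCLM y).comp (V.comp (singleCLM x))).continuous)
      simpa [Function.comp_def] using key
  · intro T S _ _
    rw [ContinuousLinearMap.add_comp, ContinuousLinearMap.comp_add]
  · intro c T _
    ext ξ
    simp
  · intro T S _ _
    ext ξ
    simp only [ContinuousLinearMap.comp_apply, ContinuousLinearMap.coe_comp',
      Function.comp_apply]
    rw [hWV]
  · intro T _
    rw [ContinuousLinearMap.adjoint_comp, ContinuousLinearMap.adjoint_comp, hW,
      ContinuousLinearMap.adjoint_adjoint, ContinuousLinearMap.comp_assoc]
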